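/- arXiv:2101.10171 — 12 statements merged into one kernel-verified Lean document; each statement's English description precedes it below -/
import Mathlib

section
/- Let A be a commutative ring, L a Gabriel filter on A, M an A-module and N ⊆ M a submodule. Then M is totally σ-artinian if, and only if, both N and M/N are totally σ-artinian. -/
/-- A Gabriel filter on a commutative ring `A`: a set of ideals containing `⊤`,
upward closed, closed under intersections, and satisfying the Gabriel condition. -/
structure IsGabrielFilter {A : Type*} [CommRing A] (L : Set (Ideal A)) : Prop where
  top_mem : ⊤ ∈ L
  mem_of_le : ∀ {a b : Ideal A}, a ∈ L → a ≤ b → b ∈ L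
  inf_mem : ∀ {a b : Ideal A}, a ∈ L → b ∈ L → a ⊓ b ∈ L
  gabriel : ∀ b : Ideal A,
    (∃ a ∈ L, ∀ x ∈ a, Submodule.colon b (Ideal.span {x}) ∈ L) → b ∈ L

/-- An `A`-module `M` is totally σ-artinian w.r.t. `L` if every decreasing chain
of submodules `N₁ ⊇ N₂ ⊇ ⋯` admits `m` and `h ∈ L` with `Nₘ·h ⊆ Nₛ` for all `s ≥ m`. -/
def TotallySigmaArtinian {A : Type*} [CommRing A] (L : Set (Ideal A))
    (M : Type*) [AddCommGroup M] [Module A M] : Prop :=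
  ∀ N : ℕ → Submodule A M, Antitone N →
    ∃ m : ℕ, ∃ h ∈ L, ∀ s : ℕ, m ≤ s → h • N m ≤ N s

theorem totallySigmaArtinian_iff_submodule_and_quotient
    {A : Type*} [CommRing A] (L : Set (Ideal A)) (hL : IsGabrielFilter L)
    (M : Type*) [AddCommGroup M] [Module A M] (N : Submodule A M) :
    TotallySigmaArtinian L M ↔
      TotallySigmaArtinian L N ∧ TotallySigmaArtinian L (M ⧸ N) := by
  have mulmem : ∀ {a b : Ideal A}, a ∈ L → b ∈ L → a * b ∈ L := by
    intro a b ha hb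
    refine hL.gabriel _ ⟨b, hb, fun x hx => hL.mem_of_le ha ?_⟩
    intro y hy
    rw [Submodule.mem_colon]
    intro p hp
    rw [SetLike.mem_coe, Ideal.mem_span_singleton] at hp
    obtain ⟨c, rfl⟩ := hp
    have : y * x ∈ a * b := Ideal.mul_mem_mul hy hx
    simpa [mul_comm, mul_assoc, mul_left_comm] using Ideal.mul_mem_right c _ this
  constructor
  · intro hM
    constructor
    · intro P hP
      obtain ⟨m, h, hh, hle⟩ := hM (fun s => (P s).map N.subtype)
        (fun i j hij => Submodule.map_mono (hP hij))
      refine ⟨m, h, hh, fun s hs => ?_⟩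
      have := hle s hs
      rw [← Submodule.map_smul''] at this
      exact (Submodule.map_le_map_iff_of_injective N.injective_subtype _ _).mp this
    · intro Q hQ
      obtain ⟨m, h, hh, hle⟩ := hM (fun s => (Q s).comap N.mkQ)
        (fun i j hij => Submodule.comap_mono (hQ hij))
      refine ⟨m, h, hh, fun s hs => ?_⟩
      have := Submodule.map_mono (f := N.mkQ) (hle s hs)
      rw [Submodule.map_smul'', Submodule.map_comap_eq_of_surjective N.mkQ_surjective,
        Submodule.map_comap_eq_of_surjective N.mkQ_surjective] at this
      exact this
  · rintro ⟨h₁', h₂'⟩ P hP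
    obtain ⟨m₁, h₁, hh₁, hle₁⟩ := h₁' (fun s => (P s ⊓ N).comap N.subtype)
      (fun i j hij => Submodule.comap_mono (inf_le_inf_right _ (hP hij)))
    obtain ⟨m₂, h₂, hh₂, hle₂⟩ := h₂' (fun s => (P s).map N.mkQ)
      (fun i j hij => Submodule.map_mono (hP hij))
    refine ⟨max m₁ m₂, h₁ * h₂, mulmem hh₁ hh₂, fun s hs => ?_⟩
    set m := max m₁ m₂
    -- h₂ • P m ≤ P s ⊔ (P m ⊓ N)
    have key : h₂ • P m ≤ P s ⊔ (P m ⊓ N) := by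
      intro x hx
      have hxm : x ∈ P m := Submodule.smul_le_right hx
      have h2s : h₂ • (P m).map N.mkQ ≤ (P s).map N.mkQ := by
        have := hle₂ s (le_trans (le_max_right m₁ m₂) hs)
        exact le_trans (Submodule.smul_mono le_rfl
          (Submodule.map_mono (hP (le_max_right m₁ m₂)))) this
      have : N.mkQ x ∈ (P s).map N.mkQ := by
        apply h2s
        rw [← Submodule.map_smul'']
        exact Submodule.mem_map_of_mem hx
      obtain ⟨y, hy, hyx⟩ := this
      have hxy : x - y ∈ N := by
        rw [← Submodule.ker_mkQ N, LinearMap.mem_ker, map_sub, hyx, sub_self]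
      have hys : y ∈ P s := hy
      have : x = y + (x - y) := by abel
      rw [this]
      exact Submodule.add_mem_sup hys ⟨Submodule.sub_mem _ hxm (hP hs hys), hxy⟩
    -- h₁ • (P m ⊓ N) ≤ P s
    have key1 : h₁ • (P m ⊓ N) ≤ P s := by
      have hm1 : (P m ⊓ N : Submodule A M) ≤ ((P m₁ ⊓ N).comap N.subtype).map N.subtype := by
        rw [Submodule.map_comap_eq, Submodule.range_subtype]
        exact le_inf inf_le_right (inf_le_inf_right N (hP (le_max_left m₁ m₂)))
      calc h₁ • (P m ⊓ N) ≤ h₁ • ((P m₁ ⊓ N).comap N.subtype).map N.subtype :=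
            Submodule.smul_mono le_rfl hm1
        _ = (h₁ • (P m₁ ⊓ N).comap N.subtype).map N.subtype := (Submodule.map_smul'' _ _ _).symm
        _ ≤ ((P s ⊓ N).comap N.subtype).map N.subtype :=
            Submodule.map_mono (hle₁ s (le_trans (le_max_left m₁ m₂) hs))
        _ ≤ P s := by
            rw [Submodule.map_comap_eq, Submodule.range_subtype]
            exact le_trans inf_le_right inf_le_left
    calc (h₁ * h₂) • P m = h₁ • (h₂ • P m) := Submodule.smul_assoc _ _ _
      _ ≤ h₁ • (P s ⊔ (P m ⊓ N)) := Submodule.smul_mono le_rfl key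
      _ = h₁ • P s ⊔ h₁ • (P m ⊓ N) := Submodule.smul_sup _ _ _
      _ ≤ P s ⊔ P s := sup_le_sup Submodule.smul_le_right key1
      _ = P s := sup_idem _
end

section
/- Let A be a commutative ring and L a Gabriel filter on A. If M and N are totally σ-artinian A-modules, then the direct sum M ⊕ N is a totally σ-artinian A-module. -/
/-- A Gabriel filter is closed under products of ideals. -/
lemma IsGabrielFilter.mul_mem {A : Type*} [CommRing A] {L : Set (Ideal A)}
    (hL : IsGabrielFilter L) {a b : Ideal A} (ha : a ∈ L) (hb : b ∈ L) :
    a * b ∈ L := by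
  apply hL.gabriel
  refine ⟨a, ha, fun x hx => hL.mem_of_le hb fun r hr => ?_⟩
  rw [Ideal.mem_colon_span_singleton, mul_comm r x]
  exact Ideal.mul_mem_mul hx hr

theorem totallySigmaArtinian_prod
    {A : Type*} [CommRing A] (L : Set (Ideal A)) (hL : IsGabrielFilter L)
    (M N : Type*) [AddCommGroup M] [Module A M] [AddCommGroup N] [Module A N]
    (hM : TotallySigmaArtinian L M) (hN : TotallySigmaArtinian L N) :
    TotallySigmaArtinian L (M × N) := by
  intro P hP
  set Q : ℕ → Submodule A M := fun n => (P n).map (LinearMap.fst A M N) with hQ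
  set R : ℕ → Submodule A N := fun n => (P n).comap (LinearMap.inr A M N) with hR
  have hQmono : Antitone Q := fun i j hij => Submodule.map_mono (hP hij)
  have hRmono : Antitone R := fun i j hij => Submodule.comap_mono (hP hij)
  obtain ⟨m₁, h₁, hh₁, H₁⟩ := hM Q hQmono
  obtain ⟨m₂, h₂, hh₂, H₂⟩ := hN R hRmono
  refine ⟨max m₁ m₂, h₁ * h₂, hL.mul_mem hh₁ hh₂, fun s hs => ?_⟩
  rw [Submodule.smul_le]
  intro r hr p hp
  refine Submodule.mul_induction_on hr (fun a ha b hb => ?_) (fun x y ihx ihy => ?_)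
  ·
    -- first coordinate
    have hx : p.1 ∈ Q (max m₁ m₂) := ⟨p, hp, rfl⟩
    have hax : a • p.1 ∈ Q s :=
      H₁ s (le_trans (le_max_left _ _) hs)
        (Submodule.smul_mem_smul ha (hQmono (le_max_left m₁ m₂) hx))
    obtain ⟨p', hp', hp'1⟩ := hax
    have hp'' : p' ∈ P s := hp'
    have hp'1' : p'.1 = a • p.1 := hp'1
    have hdiff : a • p - p' ∈ P (max m₁ m₂) :=
      sub_mem (Submodule.smul_mem _ a hp) (hP hs hp'')
    have hdiff1 : (a • p - p').1 = 0 := by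
      simp [hp'1']
    have hRmem : (a • p - p').2 ∈ R (max m₁ m₂) := by
      show LinearMap.inr A M N ((a • p - p').2) ∈ P (max m₁ m₂)
      have heq : (LinearMap.inr A M N) ((a • p - p').2) = a • p - p' := by
        ext
        · simp [hdiff1]
        · simp
      rw [heq]; exact hdiff
    have hRs : (LinearMap.inr A M N) (b • (a • p - p').2) ∈ P s :=
      H₂ s (le_trans (le_max_right _ _) hs)
        (Submodule.smul_mem_smul hb (hRmono (le_max_right m₁ m₂) hRmem))
    have key : (a * b) • p = b • p' + (LinearMap.inr A M N) (b • (a • p - p').2) := by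
      ext
      · simp [hp'1', mul_smul, mul_comm a b]
      · simp [mul_smul, mul_comm a b, smul_sub]
    rw [key]
    exact add_mem (Submodule.smul_mem _ b hp'') hRs
  · rw [add_smul]
    exact add_mem ihx ihy
end

section
/- Let A be a commutative ring and L a Gabriel filter on A. If A is totally σ-artinian with respect to L, then for every regular element a ∈ A (i.e., a non-zero-divisor) the principal ideal aA belongs to L. -/
theorem span_regular_mem_of_totallySigmaArtinian
    {A : Type*} [CommRing A] (L : Set (Ideal A)) (hL : IsGabrielFilter L)
    (hA : TotallySigmaArtinian L A)
    (a : A) (ha : a ∈ nonZeroDivisors A) :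
    Ideal.span {a} ∈ L := by
  set N : ℕ → Ideal A := fun n => Ideal.span {a ^ n} with hN
  have hanti : Antitone N := by
    intro n s hns
    rw [hN]
    simp only
    rw [Ideal.span_singleton_le_span_singleton]
    exact ⟨a ^ (s - n), by rw [← pow_add, Nat.add_sub_cancel' hns]⟩
  obtain ⟨m, h, hhL, hle⟩ := hA N hanti
  refine hL.mem_of_le hhL ?_
  intro x hx
  have hmem : x * a ^ m ∈ N (m + 1) := by
    refine hle (m + 1) (Nat.le_succ m) ?_
    exact Submodule.smul_mem_smul hx (Ideal.mem_span_singleton_self _)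
  rw [hN] at hmem
  simp only [Ideal.mem_span_singleton] at hmem
  obtain ⟨y, hy⟩ := hmem
  have hreg : a ^ m ∈ nonZeroDivisors A := pow_mem ha m
  have hx2 : x * a ^ m = (a * y) * a ^ m := by
    rw [hy, pow_succ]; ring
  have : x = a * y := (mul_cancel_right_mem_nonZeroDivisors hreg).mp hx2
  rw [Ideal.mem_span_singleton]
  exact ⟨y, this⟩
end

section
/- Let D be an integral domain and L a Gabriel filter on D with (0) ∉ L. If D is totally σ-artinian with respect to L, then L consists exactly of the nonzero ideals of D. -/
theorem gabrielFilter_eq_nonzero_ideals_of_totallySigmaArtinian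
    {D : Type*} [CommRing D] [IsDomain D] (L : Set (Ideal D)) (hL : IsGabrielFilter L)
    (hbot : (⊥ : Ideal D) ∉ L) (hD : TotallySigmaArtinian L D) :
    L = {a : Ideal D | a ≠ ⊥} := by
  ext a
  simp only [Set.mem_setOf_eq]
  constructor
  · rintro ha rfl
    exact hbot ha
  · intro ha
    obtain ⟨x, hx, hx0⟩ := Submodule.ne_bot_iff a |>.1 ha
    have hchain : Antitone (fun n : ℕ => (Ideal.span {x ^ n} : Ideal D)) := by
      intro n m hnm
      exact Ideal.span_singleton_le_span_singleton.2 (pow_dvd_pow x hnm)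
    obtain ⟨m, h, hh, hsm⟩ := hD _ hchain
    have hstep := hsm (m + 1) (Nat.le_succ m)
    have hsub : h ≤ Ideal.span {x} := by
      intro t ht
      have hmem : t * x ^ m ∈ Ideal.span {x ^ (m + 1)} := by
        have := hstep (Submodule.smul_mem_smul ht
          (Ideal.mem_span_singleton_self (x ^ m)))
        simpa [smul_eq_mul] using this
      rw [Ideal.mem_span_singleton] at hmem ⊢
      obtain ⟨c, hc⟩ := hmem
      refine ⟨c, mul_right_cancel₀ (pow_ne_zero m hx0) ?_⟩
      rw [hc, pow_succ]; ring
    exact hL.mem_of_le hh (hsub.trans ((Ideal.span_singleton_le_iff_mem a).2 hx))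
end

section
/- Let A be a commutative ring and L a Gabriel filter on A, and suppose A is totally σ-artinian with respect to L. If a is an invertible ideal of A, that is, there exist an ideal b of A and a regular element d ∈ A (a non-zero-divisor) with a·b equal to the principal ideal dA, then a belongs to L. -/
theorem invertible_ideal_mem_of_totallySigmaArtinian
    {A : Type*} [CommRing A] (L : Set (Ideal A)) (hL : IsGabrielFilter L)
    (hA : TotallySigmaArtinian L A)
    (a : Ideal A) (hinv : ∃ b : Ideal A, ∃ d ∈ nonZeroDivisors A, a * b = Ideal.span {d}) :
    a ∈ L := by
  obtain ⟨b, d, hd, hab⟩ := hinv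
  obtain ⟨m, h, hhL, hle⟩ := hA (fun n => a ^ n)
    (fun i j hij => Ideal.pow_le_pow_right hij)
  have key : h * a ^ m ≤ a ^ (m + 1) := by
    have := hle (m + 1) (Nat.le_succ m)
    simpa [smul_eq_mul] using this
  have hdm : d ^ m ∈ a ^ m * b ^ m := by
    rw [← mul_pow, hab]
    exact Ideal.pow_mem_pow (Ideal.mem_span_singleton_self d) m
  refine hL.mem_of_le hhL ?_
  intro x hx
  have hxd : x * d ^ m ∈ Ideal.span {d ^ m} * a := by
    have h1 : x * d ^ m ∈ h * (a ^ m * b ^ m) :=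
      Ideal.mul_mem_mul hx hdm
    have h2 : h * (a ^ m * b ^ m) ≤ Ideal.span {d ^ m} * a := by
      calc h * (a ^ m * b ^ m) = (h * a ^ m) * b ^ m := by ring
        _ ≤ a ^ (m + 1) * b ^ m := Ideal.mul_mono_left key
        _ = (a ^ m * b ^ m) * a := by ring
        _ = Ideal.span {d ^ m} * a := by
            rw [← mul_pow, hab, Ideal.span_singleton_pow]
    exact h2 h1
  obtain ⟨y, hy, hxy⟩ := Ideal.mem_span_singleton_mul.mp hxd
  have hdmnzd : d ^ m ∈ nonZeroDivisors A := pow_mem hd m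
  have : y = x := by
    have := hxy
    rw [mul_comm] at this
    exact (mul_cancel_right_mem_nonZeroDivisors hdmnzd).mp this
  rwa [← this]
end

section
/- Let f : A → B be a homomorphism of commutative rings such that every ideal of B is the extension of an ideal of A (for every ideal b of B there exists an ideal a of A with b = f(a)B), and let L be a Gabriel filter on A. If A is totally σ-artinian with respect to L, then B is totally f(σ)-artinian: for every decreasing chain b₁ ⊇ b₂ ⊇ ⋯ of ideals of B there exist an index m and an ideal k of B with f⁻¹(k) ∈ L such that bₘ·k ⊆ bₛ for every s ≥ m. -/
theorem totallySigmaArtinian_of_extension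
    {A B : Type*} [CommRing A] [CommRing B] (f : A →+* B)
    (hext : ∀ b : Ideal B, ∃ a : Ideal A, b = Ideal.map f a)
    (L : Set (Ideal A)) (hL : IsGabrielFilter L)
    (hA : TotallySigmaArtinian L A) :
    ∀ b : ℕ → Ideal B, Antitone b →
      ∃ m : ℕ, ∃ k : Ideal B, Ideal.comap f k ∈ L ∧
        ∀ s : ℕ, m ≤ s → k • b m ≤ b s := by
  intro b hb
  set c : ℕ → Ideal A := fun n => Ideal.comap f (b n) with hc_def
  have hc : Antitone c := fun i j hij => Ideal.comap_mono (hb hij)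
  have hbc : ∀ n, Ideal.map f (c n) = b n := by
    intro n
    obtain ⟨a, ha⟩ := hext (b n)
    refine le_antisymm Ideal.map_comap_le ?_
    calc b n = Ideal.map f a := ha
      _ ≤ Ideal.map f (c n) := Ideal.map_mono (by
          simp only [hc_def]
          rw [ha]; exact Ideal.le_comap_map)
  obtain ⟨m, h, hhL, hsm⟩ := hA c hc
  refine ⟨m, Ideal.map f h, hL.mem_of_le hhL Ideal.le_comap_map, ?_⟩
  intro s hs
  rw [← hbc m, ← hbc s]
  calc Ideal.map f h • Ideal.map f (c m) = Ideal.map f (h • c m) := by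
        rw [smul_eq_mul, smul_eq_mul, Ideal.map_mul]
    _ ≤ Ideal.map f (c s) := Ideal.map_mono (hsm s hs)
end

section
/- Let A be a commutative ring and L a Gabriel filter on A. If A is totally σ-artinian with respect to L, then every finitely generated A-module is totally σ-artinian. -/
/-- Surjective images of totally σ-artinian modules are totally σ-artinian. -/
lemma TotallySigmaArtinian.of_surjective {A : Type*} [CommRing A] {L : Set (Ideal A)}
    {M M₂ : Type*} [AddCommGroup M] [Module A M] [AddCommGroup M₂] [Module A M₂]
    (f : M →ₗ[A] M₂) (hf : Function.Surjective f)
    (hM : TotallySigmaArtinian L M) : TotallySigmaArtinian L M₂ := by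
  intro N hN
  obtain ⟨m, h, hh, hs⟩ := hM (fun i => (N i).comap f)
    (fun i j hij => Submodule.comap_mono (hN hij))
  refine ⟨m, h, hh, fun s hs' => ?_⟩
  have := Submodule.map_mono (f := f) (hs s hs')
  rwa [Submodule.map_smul'', Submodule.map_comap_eq_of_surjective hf,
    Submodule.map_comap_eq_of_surjective hf] at this

/-- Totally σ-artinian modules are closed under extensions. -/
lemma TotallySigmaArtinian.of_submodule_quotient {A : Type*} [CommRing A] {L : Set (Ideal A)}
    (hL : IsGabrielFilter L) {M : Type*} [AddCommGroup M] [Module A M] (P : Submodule A M)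
    (hP : TotallySigmaArtinian L P) (hQ : TotallySigmaArtinian L (M ⧸ P)) :
    TotallySigmaArtinian L M := by
  intro N hN
  obtain ⟨m₁, h₁, hh₁, hs₁⟩ := hQ (fun i => (N i).map P.mkQ)
    (fun i j hij => Submodule.map_mono (hN hij))
  obtain ⟨m₂, h₂, hh₂, hs₂⟩ := hP (fun i => (N i).comap P.subtype)
    (fun i j hij => Submodule.comap_mono (hN hij))
  refine ⟨max m₁ m₂, h₂ * h₁, hL.mul_mem hh₂ hh₁, fun s hs => ?_⟩
  set m := max m₁ m₂
  have hsm₁ : m₁ ≤ s := le_trans (le_max_left _ _) hs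
  have hsm₂ : m₂ ≤ s := le_trans (le_max_right _ _) hs
  -- Step 1: h₁ • N m ≤ N s ⊔ (P ⊓ N m)
  have step1 : h₁ • N m ≤ N s ⊔ (P ⊓ N m) := by
    have hmap : Submodule.map P.mkQ (h₁ • N m) ≤ Submodule.map P.mkQ (N s) := by
      rw [Submodule.map_smul'']
      calc h₁ • (N m).map P.mkQ ≤ h₁ • (N m₁).map P.mkQ :=
            Submodule.smul_mono le_rfl (Submodule.map_mono (hN (le_max_left _ _)))
        _ ≤ (N s).map P.mkQ := hs₁ s hsm₁
    have h1 : h₁ • N m ≤ N s ⊔ P := by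
      have := Submodule.comap_mono (f := P.mkQ) hmap
      refine le_trans (le_trans (Submodule.le_comap_map _ _) this) ?_
      rw [Submodule.comap_map_eq, Submodule.ker_mkQ]
    have h2 : h₁ • N m ≤ N m := Submodule.smul_le_right
    have h3 : h₁ • N m ≤ (N s ⊔ P) ⊓ N m := le_inf h1 h2
    rwa [sup_inf_assoc_of_le _ (hN hs)] at h3
  -- Step 2: h₂ • (P ⊓ N m) ≤ N s
  have step2 : h₂ • (P ⊓ N m) ≤ N s := by
    have key : h₂ • ((N m₂).comap P.subtype) ≤ (N s).comap P.subtype := hs₂ s hsm₂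
    have := Submodule.map_mono (f := P.subtype) key
    rw [Submodule.map_smul'', Submodule.map_comap_subtype, Submodule.map_comap_subtype] at this
    calc h₂ • (P ⊓ N m) ≤ h₂ • (N m₂ ⊓ P) :=
          Submodule.smul_mono le_rfl
            (le_inf (le_trans inf_le_right (hN (le_max_right _ _))) inf_le_left)
      _ ≤ N s ⊓ P := by simpa [inf_comm] using this
      _ ≤ N s := inf_le_left
  calc (h₂ * h₁) • N m = h₂ • (h₁ • N m) := mul_smul h₂ h₁ (N m)
    _ ≤ h₂ • (N s ⊔ (P ⊓ N m)) := Submodule.smul_mono le_rfl step1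
    _ = h₂ • N s ⊔ h₂ • (P ⊓ N m) := Submodule.smul_sup h₂ _ _
    _ ≤ N s ⊔ N s := sup_le_sup Submodule.smul_le_right step2
    _ = N s := sup_idem _

theorem totallySigmaArtinian_of_finite_module
    {A : Type*} [CommRing A] (L : Set (Ideal A)) (hL : IsGabrielFilter L)
    (hA : TotallySigmaArtinian L A)
    (M : Type*) [AddCommGroup M] [Module A M] [Module.Finite A M] :
    TotallySigmaArtinian L M := by
  have key : ∀ N : Submodule A M, N.FG → TotallySigmaArtinian L N := by
    intro N hN
    refine Submodule.fg_induction (motive := fun N _ => TotallySigmaArtinian L N) ?_ ?_ N hN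
    · -- cyclic submodules
      intro x
      refine TotallySigmaArtinian.of_surjective
        ((LinearEquiv.ofEq (LinearMap.range (LinearMap.toSpanSingleton A M x))
            (Submodule.span A {x})
            (LinearMap.span_singleton_eq_range A M x).symm).toLinearMap ∘ₗ
          (LinearMap.toSpanSingleton A M x).rangeRestrict) ?_ hA
      exact (LinearEquiv.surjective (LinearEquiv.ofEq _ _
        (LinearMap.span_singleton_eq_range A M x).symm)).comp
        (LinearMap.surjective_rangeRestrict _)
    · -- sups
      intro N₁ N₂ _ _ h₁ h₂
      set P : Submodule A ↥(N₁ ⊔ N₂) := N₁.comap (N₁ ⊔ N₂).subtype with hP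
      refine TotallySigmaArtinian.of_submodule_quotient hL P ?_ ?_
      · exact TotallySigmaArtinian.of_surjective
          (Submodule.comapSubtypeEquivOfLe (le_sup_left : N₁ ≤ N₁ ⊔ N₂)).symm.toLinearMap
          (Submodule.comapSubtypeEquivOfLe _).symm.surjective h₁
      · refine TotallySigmaArtinian.of_surjective
          (P.mkQ ∘ₗ Submodule.inclusion (le_sup_right : N₂ ≤ N₁ ⊔ N₂)) ?_ h₂
        rintro q
        obtain ⟨⟨x, hx⟩, rfl⟩ := P.mkQ_surjective q
        obtain ⟨y, hy, z, hz, rfl⟩ := Submodule.mem_sup.mp hx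
        refine ⟨⟨z, hz⟩, ?_⟩
        simp only [LinearMap.coe_comp, Function.comp_apply]
        rw [← sub_eq_zero, ← map_sub, Submodule.mkQ_apply, Submodule.Quotient.mk_eq_zero]
        show (⟨z, _⟩ - ⟨y + z, hx⟩ : ↥(N₁ ⊔ N₂)) ∈ P
        simp only [hP, Submodule.mem_comap]
        convert N₁.neg_mem hy using 1
        simp
  exact TotallySigmaArtinian.of_surjective (Submodule.topEquiv).toLinearMap
    Submodule.topEquiv.surjective (key ⊤ (Module.Finite.fg_top))
end

section
/- Let A be a commutative ring, L a Gabriel filter on A, M an A-module and T ⊆ M a totally σ-torsion submodule. Then M is totally σ-artinian if, and only if, M/T is totally σ-artinian. -/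
theorem totallySigmaArtinian_iff_quotient_by_totallyTorsion
    {A : Type*} [CommRing A] (L : Set (Ideal A)) (hL : IsGabrielFilter L)
    (M : Type*) [AddCommGroup M] [Module A M]
    (T : Submodule A M) (hT : ∃ h ∈ L, h • T = ⊥) :
    TotallySigmaArtinian L M ↔ TotallySigmaArtinian L (M ⧸ T) := by
  obtain ⟨h₀, h₀L, h₀T⟩ := hT
  constructor
  · intro H N hN
    obtain ⟨m, h, hh, hle⟩ := H (fun n => (N n).comap T.mkQ)
      (fun i j hij => Submodule.comap_mono (hN hij))
    refine ⟨m, h, hh, fun s hs => ?_⟩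
    have h1 : Submodule.map T.mkQ ((N s).comap T.mkQ) = N s :=
      Submodule.map_comap_eq_of_surjective (Submodule.mkQ_surjective T) _
    have h2 : Submodule.map T.mkQ ((N m).comap T.mkQ) = N m :=
      Submodule.map_comap_eq_of_surjective (Submodule.mkQ_surjective T) _
    calc h • N m = Submodule.map T.mkQ (h • (N m).comap T.mkQ) := by
          rw [Submodule.map_smul'', h2]
      _ ≤ Submodule.map T.mkQ ((N s).comap T.mkQ) := Submodule.map_mono (hle s hs)
      _ = N s := h1
  · intro H N hN
    obtain ⟨m, h, hh, hle⟩ := H (fun n => (N n).map T.mkQ)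
      (fun i j hij => Submodule.map_mono (hN hij))
    refine ⟨m, h₀ * h, hL.mul_mem h₀L hh, fun s hs => ?_⟩
    have key : h • N m ≤ N s ⊔ T := by
      have : Submodule.map T.mkQ (h • N m) ≤ Submodule.map T.mkQ (N s) := by
        rw [Submodule.map_smul'']; exact hle s hs
      have h3 := Submodule.comap_mono (f := T.mkQ) this
      calc h • N m ≤ Submodule.comap T.mkQ (Submodule.map T.mkQ (h • N m)) :=
            Submodule.le_comap_map _ _
        _ ≤ Submodule.comap T.mkQ (Submodule.map T.mkQ (N s)) := h3
        _ = N s ⊔ T := by rw [Submodule.comap_map_eq, Submodule.ker_mkQ]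
    calc (h₀ * h) • N m = h₀ • (h • N m) := mul_smul h₀ h (N m)
      _ ≤ h₀ • (N s ⊔ T) := smul_mono_right h₀ key
      _ = h₀ • N s ⊔ h₀ • T := Submodule.smul_sup _ _ _
      _ = h₀ • N s ⊔ ⊥ := by rw [h₀T]
      _ = h₀ • N s := sup_bot_eq _
      _ ≤ N s := Submodule.smul_le_right
end

section
/- Let A be a commutative ring and p ⊆ A a prime ideal. If A is totally (A∖p)-artinian, i.e., for every decreasing chain a₁ ⊇ a₂ ⊇ ⋯ of ideals of A there exist an index m and an element s ∈ A∖p such that aₘ·s ⊆ aₙ for every n ≥ m, then p is a minimal prime ideal of A. -/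
/-- A commutative ring `A` is totally `S`-artinian for a subset `S ⊆ A` if every decreasing
chain of ideals admits `m` and `s ∈ S` with `aₘ·s ⊆ aₙ` for every `n ≥ m`. -/
def TotallySArtinianRing (A : Type*) [CommRing A] (S : Set A) : Prop :=
  ∀ a : ℕ → Ideal A, Antitone a →
    ∃ m : ℕ, ∃ s ∈ S, ∀ n : ℕ, m ≤ n → ∀ x ∈ a m, s * x ∈ a n

theorem minimal_prime_of_totallySArtinian
    {A : Type*} [CommRing A] (p : Ideal A) (hp : p.IsPrime)
    (hA : TotallySArtinianRing A {x : A | x ∉ p}) :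
    p ∈ minimalPrimes A := by
  constructor
  · exact ⟨hp, bot_le⟩
  · rintro q ⟨hq, -⟩ hqp
    intro x hx
    have hanti : Antitone (fun n : ℕ => Ideal.span {x ^ n}) := by
      intro i j hij
      exact Ideal.span_singleton_le_span_singleton.mpr (pow_dvd_pow x hij)
    obtain ⟨m, s, hs, h⟩ := hA (fun n => Ideal.span {x ^ n}) hanti
    have hmem := h (m + 1) (Nat.le_succ m) (x ^ m) (Ideal.subset_span rfl)
    obtain ⟨c, hc⟩ := Ideal.mem_span_singleton'.mp hmem
    by_contra hxq
    have h0 : x ^ m * (s - c * x) = 0 := by linear_combination -hc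
    have hzero : x ^ m * (s - c * x) ∈ q := h0 ▸ q.zero_mem
    rcases hq.mem_or_mem hzero with h1 | h2
    · exact hxq (hq.mem_of_pow_mem m h1)
    · have : s - c * x ∈ p := hqp h2
      have : s ∈ p := by
        have := p.add_mem this (p.mul_mem_left c hx)
        simpa using this
      exact hs this
end

section
/- Let A be a commutative ring and L a Gabriel filter on A. If A is σ-artinian with respect to L, then the set K(σ) = {p : p is a prime ideal of A with p ∉ L} is finite. -/
/-- `A` is σ-artinian w.r.t. `L`: every decreasing chain of ideals is σ-stable. -/
def SigmaArtinianRing {A : Type*} [CommRing A] (L : Set (Ideal A)) : Prop :=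
  ∀ a : ℕ → Ideal A, Antitone a →
    ∃ m : ℕ, ∀ s : ℕ, m ≤ s → ∀ x ∈ a m, ∃ h ∈ L, ∀ y ∈ h, x * y ∈ a s

/-- In a σ-artinian ring, any prime strictly above another prime belongs to `L`. -/
lemma mem_of_lt_prime {A : Type*} [CommRing A] {L : Set (Ideal A)} (hL : IsGabrielFilter L)
    (hA : SigmaArtinianRing L) {p q : Ideal A} (hp : p.IsPrime) (hq : q.IsPrime)
    (hpq : p < q) : q ∈ L := by
  obtain ⟨x, hxq, hxp⟩ := SetLike.exists_of_lt hpq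
  set a : ℕ → Ideal A := fun n => p ⊔ Ideal.span {x ^ n} with ha
  have hanti : Antitone a := by
    intro i j hij
    apply sup_le_sup_left
    rw [Ideal.span_singleton_le_span_singleton]
    exact pow_dvd_pow x hij
  obtain ⟨m, hm⟩ := hA a hanti
  have hxm : x ^ m ∈ a m :=
    le_sup_right (a := p) (Ideal.subset_span rfl)
  obtain ⟨h, hhL, hh⟩ := hm (m + 1) (Nat.le_succ m) (x ^ m) hxm
  refine hL.mem_of_le hhL ?_
  intro y hy
  have hmem := hh y hy
  rw [ha] at hmem
  obtain ⟨z, hz, w, hw, hzw⟩ := Submodule.mem_sup.mp hmem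
  obtain ⟨c, hc⟩ := Ideal.mem_span_singleton.mp hw
  have hkey : x ^ m * (y - x * c) ∈ p := by
    have : x ^ m * (y - x * c) = z := by
      rw [hc] at hzw
      rw [mul_sub]
      rw [← hzw]
      ring
    rw [this]; exact hz
  have hy' : y - x * c ∈ p := by
    rcases hp.mem_or_mem hkey with hc1 | hc2
    · exact absurd (hp.mem_of_pow_mem m hc1) hxp
    · exact hc2
  have : y = (y - x * c) + x * c := by ring
  rw [this]
  exact q.add_mem (le_of_lt hpq hy') (q.mul_mem_right c hxq)

theorem finite_K_of_sigmaArtinian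
    {A : Type*} [CommRing A] (L : Set (Ideal A)) (hL : IsGabrielFilter L)
    (hA : SigmaArtinianRing L) :
    {p : Ideal A | p.IsPrime ∧ p ∉ L}.Finite := by
  by_contra hfin
  have hinf : {p : Ideal A | p.IsPrime ∧ p ∉ L}.Infinite := hfin
  set f := hinf.natEmbedding with hf
  set g : ℕ → Ideal A := fun n => (f n : Ideal A) with hg
  have hg_prime : ∀ n, (g n).IsPrime := fun n => (f n).2.1
  have hg_not : ∀ n, g n ∉ L := fun n => (f n).2.2
  have hg_inj : Function.Injective g := fun i j hij =>
    f.injective (Subtype.ext hij)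
  set a : ℕ → Ideal A := fun n => (Finset.range (n + 1)).inf g with ha
  have hanti : Antitone a := fun i j hij =>
    Finset.inf_mono (Finset.range_subset_range.mpr (by omega))
  obtain ⟨m, hm⟩ := hA a hanti
  -- a m is not contained in g (m+1)
  have hnotle : ¬ a m ≤ g (m + 1) := by
    intro hle
    obtain ⟨i, hi, hile⟩ := ((hg_prime (m + 1)).inf_le').mp hle
    have him : i < m + 1 := Finset.mem_range.mp hi
    have hne : g i ≠ g (m + 1) := fun e => (by omega : i ≠ m + 1) (hg_inj e)
    exact hg_not (m + 1)
      (mem_of_lt_prime hL hA (hg_prime i) (hg_prime (m + 1)) (lt_of_le_of_ne hile hne))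
  obtain ⟨x, hxa, hxq⟩ := SetLike.not_le_iff_exists.mp hnotle
  obtain ⟨h, hhL, hh⟩ := hm (m + 1) (Nat.le_succ m) x hxa
  refine hg_not (m + 1) (hL.mem_of_le hhL ?_)
  intro y hy
  have hmem : x * y ∈ g (m + 1) := by
    have := hh y hy
    have hle : a (m + 1) ≤ g (m + 1) :=
      Finset.inf_le (Finset.self_mem_range_succ (m + 1))
    exact hle this
  rcases (hg_prime (m + 1)).mem_or_mem hmem with h1 | h2
  · exact absurd h1 hxq
  · exact h2
end

section
/- Let A be a commutative ring. The following statements are equivalent: (a) A is an artinian ring; (b) for every prime ideal p of A, A is totally (A∖p)-artinian; (c) for every maximal ideal m of A, A is totally (A∖m)-artinian. -/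
theorem isArtinianRing_iff_totallySArtinian_primes_iff_maximals
    (A : Type*) [CommRing A] :
    (IsArtinianRing A ↔
      ∀ p : Ideal A, p.IsPrime → TotallySArtinianRing A {x : A | x ∉ p}) ∧
    ((∀ p : Ideal A, p.IsPrime → TotallySArtinianRing A {x : A | x ∉ p}) ↔
      ∀ m : Ideal A, m.IsMaximal → TotallySArtinianRing A {x : A | x ∉ m}) := by
  -- (a) → (b)
  have hab : IsArtinianRing A →
      ∀ p : Ideal A, p.IsPrime → TotallySArtinianRing A {x : A | x ∉ p} := by
    intro hart p hp a hanti
    have : IsArtinian A A := hart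
    obtain ⟨m, hm⟩ := IsArtinian.monotone_stabilizes
      (⟨fun n => OrderDual.toDual (a n), fun i j hij => hanti hij⟩ : ℕ →o (Ideal A)ᵒᵈ)
    refine ⟨m, 1, fun h1 => hp.ne_top ((Ideal.eq_top_iff_one p).mpr h1), fun n hn x hx => ?_⟩
    have : a m = a n := hm n hn
    rw [one_mul, ← this]
    exact hx
  -- (c) → (a)
  have hca : (∀ m : Ideal A, m.IsMaximal → TotallySArtinianRing A {x : A | x ∉ m}) →
      IsArtinianRing A := by
    intro H
    have : IsArtinian A A := by
      rw [← monotone_stabilizes_iff_artinian]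
      intro f
      set a : ℕ → Ideal A := fun n => OrderDual.ofDual (f n) with ha
      have hanti : Antitone a := fun i j hij => f.monotone hij
      let J : Ideal A :=
        { carrier := {s | ∃ m, ∀ n, m ≤ n → ∀ x ∈ a m, s * x ∈ a n}
          zero_mem' := ⟨0, fun n _ x _ => by simp⟩
          add_mem' := by
            rintro s t ⟨ms, hs⟩ ⟨mt, ht⟩
            refine ⟨max ms mt, fun n hn x hx => ?_⟩
            have hxs : x ∈ a ms := hanti (le_max_left ms mt) hx
            have hxt : x ∈ a mt := hanti (le_max_right ms mt) hx
            rw [add_mul]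
            exact (a n).add_mem (hs n (le_trans (le_max_left ms mt) hn) x hxs)
              (ht n (le_trans (le_max_right ms mt) hn) x hxt)
          smul_mem' := by
            rintro c s ⟨ms, hs⟩
            refine ⟨ms, fun n hn x hx => ?_⟩
            rw [smul_mul_assoc]
            exact (a n).smul_mem c (hs n hn x hx) }
      have hJ : J = ⊤ := by
        by_contra h
        obtain ⟨M, hM, hle⟩ := Ideal.exists_le_maximal J h
        obtain ⟨m, s, hs, hstab⟩ := H M hM a hanti
        exact hs (hle ⟨m, hstab⟩)
      have h1 : (1 : A) ∈ J := hJ ▸ Submodule.mem_top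
      obtain ⟨m, hm⟩ := h1
      refine ⟨m, fun n hn => ?_⟩
      have h1 : a n ≤ a m := hanti hn
      have h2 : a m ≤ a n := fun x hx => by simpa using hm n hn x hx
      show a m = a n
      exact le_antisymm h2 h1
    exact this
  refine ⟨⟨fun h => hab h, fun h => hca (fun m hm => h m hm.isPrime)⟩,
    ⟨fun h m hm => h m hm.isPrime, fun h => hab (hca h)⟩⟩
end

section
/- Let A be a commutative ring and L a Gabriel filter on A of finite type, and let K(σ) = {p : p is a prime ideal of A with p ∉ L}. The following statements are equivalent: (a) A is totally σ-artinian with respect to L; (b) K(σ) is finite, there are no strict inclusions between elements of K(σ) (every element of K(σ) is maximal in K(σ)), and for every p ∈ K(σ) the ring A is totally (A∖p)-artinian, i.e., for every decreasing chain a₁ ⊇ a₂ ⊇ ⋯ of ideals there exist an index m and s ∈ A∖p with aₘ·s ⊆ aₙ for every n ≥ m. -/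
theorem IsGabrielFilter.exists_prime {A : Type*} [CommRing A] {L : Set (Ideal A)}
    (hL : IsGabrielFilter L)
    (hft : ∀ a ∈ L, ∃ a' : Ideal A, a' ≤ a ∧ a'.FG ∧ a' ∈ L)
    {a : Ideal A} (ha : a ∉ L) : ∃ p : Ideal A, a ≤ p ∧ p.IsPrime ∧ p ∉ L := by
  obtain ⟨p, hap, hpS, hpmax⟩ := zorn_le_nonempty₀ {b : Ideal A | b ∉ L}
    (fun c hcS hc y hy => by
      refine ⟨sSup c, fun hmem => ?_, fun z hz => le_sSup hz⟩
      obtain ⟨a', ha'le, ha'fg, ha'L⟩ := hft _ hmem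
      obtain ⟨x, hxc, hlex⟩ :=
        (CompleteLattice.isCompactElement_iff_le_of_directed_sSup_le _ a').mp
          ((Submodule.fg_iff_compact a').mp ha'fg) c ⟨y, hy⟩ hc.directedOn ha'le
      exact hcS hxc (hL.mem_of_le ha'L hlex)) a ha
  refine ⟨p, hap, ⟨fun htop => hpS (htop ▸ hL.top_mem), ?_⟩, hpS⟩
  intro x y hxy
  by_contra hcon
  push_neg at hcon
  obtain ⟨hxp, hyp⟩ := hcon
  have hsup : ∀ w : A, w ∉ p → p ⊔ Ideal.span {w} ∈ L := by
    intro w hw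
    by_contra hnot
    exact hw (hpmax hnot le_sup_left
      (Submodule.mem_sup_right (Ideal.mem_span_singleton_self w)))
  apply hpS
  apply hL.gabriel p
  refine ⟨p ⊔ Ideal.span {x}, hsup x hxp, fun z hz => ?_⟩
  obtain ⟨π, hπ, w, hw, rfl⟩ := Submodule.mem_sup.mp hz
  obtain ⟨c, rfl⟩ := Ideal.mem_span_singleton'.mp hw
  refine hL.mem_of_le (hsup y hyp) ?_
  intro u hu
  obtain ⟨β, hβ, w', hw', rfl⟩ := Submodule.mem_sup.mp hu
  obtain ⟨e, rfl⟩ := Ideal.mem_span_singleton'.mp hw'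
  rw [Submodule.mem_colon]
  intro v hv
  obtain ⟨d, rfl⟩ := Ideal.mem_span_singleton'.mp hv
  rw [smul_eq_mul]
  have key : (β + e * y) * (π + c * x) ∈ p := by
    have heq : (β + e * y) * (π + c * x)
        = β * (π + c * x) + (e * y) * π + (e * c) * (x * y) := by ring
    rw [heq]
    exact add_mem (add_mem (Ideal.mul_mem_right _ p hβ) (Ideal.mul_mem_left p _ hπ))
      (Ideal.mul_mem_left p _ hxy)
  have : (β + e * y) * (d * (π + c * x)) = d * ((β + e * y) * (π + c * x)) := by ring
  rw [this]
  exact Ideal.mul_mem_left p _ key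

theorem totallySigmaArtinian_iff_finite_K_and_totallySArtinian
    {A : Type*} [CommRing A] (L : Set (Ideal A)) (hL : IsGabrielFilter L)
    (hft : ∀ a ∈ L, ∃ a' : Ideal A, a' ≤ a ∧ a'.FG ∧ a' ∈ L) :
    TotallySigmaArtinian L A ↔
      ({p : Ideal A | p.IsPrime ∧ p ∉ L}.Finite ∧
        (∀ p ∈ {p : Ideal A | p.IsPrime ∧ p ∉ L}, ∀ q ∈ {p : Ideal A | p.IsPrime ∧ p ∉ L},
          p ≤ q → p = q) ∧
        ∀ p ∈ {p : Ideal A | p.IsPrime ∧ p ∉ L}, TotallySArtinianRing A {x : A | x ∉ p}) := by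
  constructor
  · intro hTSA
    -- maximality
    have hmax : ∀ p ∈ {p : Ideal A | p.IsPrime ∧ p ∉ L},
        ∀ q ∈ {p : Ideal A | p.IsPrime ∧ p ∉ L}, p ≤ q → p = q := by
      rintro p ⟨hp, hpL⟩ q ⟨hq, hqL⟩ hpq
      by_contra hne
      obtain ⟨x, hxq, hxp⟩ := SetLike.exists_of_lt (lt_of_le_of_ne hpq hne)
      set a : ℕ → Ideal A := fun n => p ⊔ Ideal.span {x ^ n} with ha
      have hanti : Antitone a := fun n k hnk =>
        sup_le_sup_left (Ideal.span_singleton_le_span_singleton.mpr (pow_dvd_pow x hnk)) p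
      obtain ⟨m, h, hhL, hprop⟩ := hTSA a hanti
      apply hqL
      apply hL.mem_of_le hhL
      intro y hy
      have hxm : x ^ m ∈ a m := Submodule.mem_sup_right (Ideal.mem_span_singleton_self _)
      have hym : y * x ^ m ∈ a (m + 1) := by
        have := hprop (m + 1) (Nat.le_succ m) (Submodule.smul_mem_smul hy hxm)
        rwa [smul_eq_mul] at this
      obtain ⟨π, hπ, w, hw, heq⟩ := Submodule.mem_sup.mp hym
      obtain ⟨c, rfl⟩ := Ideal.mem_span_singleton'.mp hw
      have hkey : (y - c * x) * x ^ m ∈ p := by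
        have : (y - c * x) * x ^ m = π := by
          linear_combination -heq
        rw [this]; exact hπ
      have hyc : y - c * x ∈ p :=
        (hp.mem_or_mem hkey).resolve_right fun hm => hxp (hp.mem_of_pow_mem m hm)
      have : y = (y - c * x) + c * x := by ring
      rw [this]
      exact add_mem (hpq hyc) (Ideal.mul_mem_left q _ hxq)
    refine ⟨?_, hmax, ?_⟩
    · -- finiteness
      by_contra hinf
      have hinf' : {p : Ideal A | p.IsPrime ∧ p ∉ L}.Infinite := hinf
      let f := hinf'.natEmbedding
      set P : ℕ → Ideal A := fun n => (f n : Ideal A) with hP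
      have hPprime : ∀ n, (P n).IsPrime := fun n => (f n).2.1
      have hPL : ∀ n, P n ∉ L := fun n => (f n).2.2
      have hPinj : Function.Injective P := fun i j hij => f.injective (Subtype.ext hij)
      set a : ℕ → Ideal A := fun n => (Finset.range (n + 1)).inf P with haa
      have hanti : Antitone a := fun n k hnk =>
        Finset.inf_mono (Finset.range_subset_range.mpr (by omega))
      obtain ⟨m, h, hhL, hprop⟩ := hTSA a hanti
      have hstep : h • a m ≤ a (m + 1) := hprop (m + 1) (Nat.le_succ m)
      have hla : a (m + 1) ≤ P (m + 1) := Finset.inf_le (Finset.self_mem_range_succ (m + 1))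
      obtain ⟨y, hyh, hyP⟩ := SetLike.not_le_iff_exists.mp
        (fun hle => hPL (m + 1) (hL.mem_of_le hhL hle))
      have ham : a m ≤ P (m + 1) := by
        intro z hz
        have hyz : y * z ∈ P (m + 1) := by
          have := hla (hstep (Submodule.smul_mem_smul hyh hz))
          rwa [smul_eq_mul] at this
        exact ((hPprime (m + 1)).mem_or_mem hyz).resolve_left hyP
      obtain ⟨i, hi, hile⟩ := (hPprime (m + 1)).inf_le'.mp ham
      have : P i = P (m + 1) :=
        hmax _ ⟨hPprime i, hPL i⟩ _ ⟨hPprime (m + 1), hPL (m + 1)⟩ hile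
      have := hPinj this
      rw [Finset.mem_range] at hi
      omega
    · -- totally (A∖p)-artinian
      rintro p ⟨hp, hpL⟩ a hanti
      obtain ⟨m, h, hhL, hprop⟩ := hTSA a hanti
      obtain ⟨s, hsh, hsp⟩ := SetLike.not_le_iff_exists.mp
        (fun hle => hpL (hL.mem_of_le hhL hle))
      refine ⟨m, s, hsp, fun n hn x hx => ?_⟩
      have := hprop n hn (Submodule.smul_mem_smul hsh hx)
      rwa [smul_eq_mul] at this
  · rintro ⟨hfin, _, hart⟩ N hN
    classical
    set F := hfin.toFinset with hF
    have H : ∀ p ∈ F, ∃ m : ℕ, ∃ s : A, s ∉ p ∧ ∀ n : ℕ, m ≤ n → ∀ x ∈ N m, s * x ∈ N n := by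
      intro p hp
      obtain ⟨m, s, hs, hprop⟩ := hart p (hfin.mem_toFinset.mp hp) N hN
      exact ⟨m, s, hs, hprop⟩
    choose! mfun sfun hs hprop using H
    set m := F.sup mfun with hm
    refine ⟨m, Ideal.span (sfun '' ↑F), ?_, fun n hn => ?_⟩
    · by_contra hnot
      obtain ⟨q, hhq, hqprime, hqL⟩ := hL.exists_prime hft hnot
      have hqF : q ∈ F := hfin.mem_toFinset.mpr ⟨hqprime, hqL⟩
      exact hs q hqF (hhq (Ideal.subset_span ⟨q, hqF, rfl⟩))
    · have hcolon : Ideal.span (sfun '' ↑F) ≤ Submodule.colon (N n) (N m) := by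
        rw [Ideal.span_le]
        rintro _ ⟨p, hpF, rfl⟩
        rw [SetLike.mem_coe, Submodule.mem_colon]
        intro z hz
        have hz' : z ∈ N (mfun p) := hN (Finset.le_sup hpF) hz
        have := hprop p hpF n (le_trans (Finset.le_sup hpF) hn) z hz'
        rwa [smul_eq_mul]
      rw [Submodule.smul_le]
      intro r hr x hx
      exact Submodule.mem_colon.mp (hcolon hr) x hx
end
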